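/- Let H be a complex Hilbert space with inner product ⟪·,·⟫ conjugate-linear in the first argument. Let R be a pseudo-resolvent on the nonreal points of ℂ (R z : H → H bounded, R z - R w = (z - w) • (R z ∘ R w) for all nonreal z, w) such that the Hilbert adjoint of R z equals R (conj z) for every nonreal z. Fix a nonreal w₀ and ψ₀ ∈ H and set ψ(z) := ψ₀ + (z - w₀) • (R z ψ₀) for nonreal z. Let w be nonreal and let φ ∈ H satisfy ⟪ψ(conj w), φ⟫ = 0. Define η := φ + (w - conj w) • (R w φ). Then: (a) ‖η‖ = ‖φ‖, and (b) for every nonreal z with z ≠ w, ⟪ψ(conj z), η⟫ = ((z - conj w) / (z - w)) * ⟪ψ(conj z), φ⟫. -/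

import Mathlib

open scoped InnerProductSpace ComplexConjugate

/-- Verification of de Branges axiom (A2) in the functional model: if
`⟪ψ(conj w), φ⟫ = 0` and `η = φ + (w - conj w) • R w φ`, then `‖η‖ = ‖φ‖` and
`⟪ψ(conj z), η⟫ = ((z - conj w)/(z - w)) * ⟪ψ(conj z), φ⟫` for nonreal `z ≠ w`. -/
theorem stmt11 {H : Type*} [NormedAddCommGroup H] [InnerProductSpace ℂ H] [CompleteSpace H]
    (R : ℂ → H →L[ℂ] H)
    (hres : ∀ z w : ℂ, z.im ≠ 0 → w.im ≠ 0 → R z - R w = (z - w) • (R z ∘L R w))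
    (hadj : ∀ z : ℂ, z.im ≠ 0 → ContinuousLinearMap.adjoint (R z) = R (conj z))
    (w₀ : ℂ) (hw₀ : w₀.im ≠ 0) (ψ₀ : H)
    (ψ : ℂ → H) (hψ : ∀ z : ℂ, z.im ≠ 0 → ψ z = ψ₀ + (z - w₀) • (R z ψ₀))
    (w : ℂ) (hw : w.im ≠ 0) (φ : H) (hφ : ⟪ψ (conj w), φ⟫_ℂ = 0)
    (η : H) (hη : η = φ + (w - conj w) • (R w φ)) :
    ‖η‖ = ‖φ‖ ∧
    ∀ z : ℂ, z.im ≠ 0 → z ≠ w →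
      ⟪ψ (conj z), η⟫_ℂ = ((z - conj w) / (z - w)) * ⟪ψ (conj z), φ⟫_ℂ := by
  have hwc : (conj w).im ≠ 0 := by simpa using hw
  -- adjoint inner lemma
  have hAI : ∀ a : ℂ, a.im ≠ 0 → ∀ x y : H, ⟪R a x, y⟫_ℂ = ⟪x, R (conj a) y⟫_ℂ := by
    intro a ha x y
    rw [← hadj a ha, ContinuousLinearMap.adjoint_inner_right]
  -- key vector identity
  have hkey : ∀ a b : ℂ, a.im ≠ 0 → b.im ≠ 0 → ψ a - ψ b = (a - b) • R a (ψ b) := by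
    intro a b ha hb
    have h1 : R a ψ₀ - R b ψ₀ = (a - b) • R a (R b ψ₀) := by
      have := congrArg (fun T : H →L[ℂ] H => T ψ₀) (hres a b ha hb)
      simpa using this
    rw [hψ a ha, hψ b hb, map_add, map_smul]
    rw [smul_add, smul_smul, mul_comm, ← smul_smul, ← h1]
    rw [smul_sub]
    have hab : a - b + (b - w₀) = a - w₀ := by ring
    calc ψ₀ + (a - w₀) • R a ψ₀ - (ψ₀ + (b - w₀) • R b ψ₀)
        = (a - w₀) • R a ψ₀ - (b - w₀) • R b ψ₀ := by abel
      _ = (a - b) • R a ψ₀ + ((b - w₀) • R a ψ₀ - (b - w₀) • R b ψ₀) := by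
          rw [← hab, add_smul]; abel
  constructor
  · -- norm part
    have h1 : R (conj w) φ - R w φ = (conj w - w) • R (conj w) (R w φ) := by
      have := congrArg (fun T : H →L[ℂ] H => T φ) (hres (conj w) w hwc hw)
      simpa using this
    have h2 : ⟪φ, R (conj w) φ⟫_ℂ - ⟪φ, R w φ⟫_ℂ
        = (conj w - w) * ⟪R w φ, R w φ⟫_ℂ := by
      have := congrArg (fun x : H => ⟪φ, x⟫_ℂ) h1
      simp only [inner_sub_right, inner_smul_right] at this
      rw [this, ← hAI w hw φ (R w φ)]
    have h3 : ⟪η, η⟫_ℂ = ⟪φ, φ⟫_ℂ := by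
      rw [hη, inner_add_add_self, inner_smul_left, inner_smul_right, inner_smul_left,
        inner_smul_right, hAI w hw φ φ, map_sub, Complex.conj_conj]
      linear_combination (conj w - w) * h2
    have h4 : ‖η‖ ^ 2 = ‖φ‖ ^ 2 := by
      rw [inner_self_eq_norm_sq_to_K, inner_self_eq_norm_sq_to_K] at h3
      exact_mod_cast h3
    exact (sq_eq_sq₀ (norm_nonneg _) (norm_nonneg _)).mp h4
  · intro z hz hzw
    have hzc : (conj z).im ≠ 0 := by simpa using hz
    have h2 := hkey (conj w) (conj z) hwc hzc
    have h3 : ⟪ψ (conj z), R w φ⟫_ℂ = ⟪R (conj w) (ψ (conj z)), φ⟫_ℂ := by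
      rw [hAI (conj w) hwc, Complex.conj_conj]
    have h4 : (w - z) * ⟪ψ (conj z), R w φ⟫_ℂ = -⟪ψ (conj z), φ⟫_ℂ := by
      have := congrArg (fun x : H => ⟪x, φ⟫_ℂ) h2
      simp only [inner_sub_left, inner_smul_left, hφ, map_sub, Complex.conj_conj] at this
      rw [h3, ← this]; ring
    have hzw' : z - w ≠ 0 := sub_ne_zero.mpr hzw
    rw [hη, inner_add_right, inner_smul_right]
    field_simp
    linear_combination (conj w - w) * h4
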